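/- arXiv:2210.03917 — 2 statements merged into one kernel-verified Lean document; each statement's English description precedes it below -/
import Mathlib

section
/- Fix ρ > 0, T > 0, x, y ∈ ℝ. For every continuous, piecewise C¹ function δ: [0,T] → ℝ with δ(0) = 0, δ(T) = x, ∫₀ᵀ δ dt = y, one has ρ∫₀ᵀ δ(t)² dt + ∫₀ᵀ δ'(t)² dt ≥ √ρ·( x² coth(√ρ T) + (x tanh(√ρ T/2) − √ρ y)²/(√ρ T − 2 tanh(√ρ T/2)) ), with equality if and only if δ(t) = c₁ sinh(√ρ t) + c₂ sinh(√ρ(T−t)) + c₃ for the constants c₁, c₂, c₃ determined by the three constraints. -/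
open Real MeasureTheory Set intervalIntegral

/-- tanh u < u for u > 0 -/
lemma my_tanh_lt_self {u : ℝ} (hu : 0 < u) : Real.tanh u < u := by
  have hc : 0 < Real.cosh u := Real.cosh_pos u
  rw [Real.tanh_eq_sinh_div_cosh, div_lt_iff₀ hc]
  have key : StrictMonoOn (fun v => v * Real.cosh v - Real.sinh v) (Set.Ici 0) := by
    apply strictMonoOn_of_deriv_pos (convex_Ici 0)
    · exact ((continuous_id.mul Real.continuous_cosh).sub Real.continuous_sinh).continuousOn
    · intro v hv
      rw [interior_Ici, Set.mem_Ioi] at hv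
      have h1 : HasDerivAt (fun v => v * Real.cosh v - Real.sinh v)
          (1 * Real.cosh v + v * Real.sinh v - Real.cosh v) v :=
        ((hasDerivAt_id v).mul (Real.hasDerivAt_cosh v)).sub (Real.hasDerivAt_sinh v)
      rw [h1.deriv]
      have := Real.sinh_pos_iff.2 hv
      nlinarith
  have := key (Set.self_mem_Ici) (Set.mem_Ici.2 hu.le) hu
  simp at this
  linarith

/-- FTC with a finite exceptional set. -/
lemma my_ftc_finset (s : Finset ℝ) :
    ∀ (F F' : ℝ → ℝ) (a b : ℝ), a ≤ b → ContinuousOn F (Set.Icc a b) →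
    (∀ t ∈ Set.Ioo a b \ (s : Set ℝ), HasDerivAt F (F' t) t) →
    IntervalIntegrable F' volume a b →
    ∫ t in a..b, F' t = F b - F a := by
  classical
  induction s using Finset.induction_on with
  | empty =>
    intro F F' a b hab hc hd hi
    exact integral_eq_sub_of_hasDeriv_right_of_le hab hc
      (fun t ht => (hd t ⟨ht, by simp⟩).hasDerivWithinAt) hi
  | @insert c s' hc' IH =>
    intro F F' a b hab hc hd hi
    by_cases hcmem : c ∈ Set.Ioo a b
    · have hsub1 : Set.uIcc a c ⊆ Set.uIcc a b := by
        rw [Set.uIcc_of_le hcmem.1.le, Set.uIcc_of_le hab]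
        exact Set.Icc_subset_Icc le_rfl hcmem.2.le
      have hsub2 : Set.uIcc c b ⊆ Set.uIcc a b := by
        rw [Set.uIcc_of_le hcmem.2.le, Set.uIcc_of_le hab]
        exact Set.Icc_subset_Icc hcmem.1.le le_rfl
      have hi1 := hi.mono_set hsub1
      have hi2 := hi.mono_set hsub2
      have h1 : ∫ t in a..c, F' t = F c - F a := by
        apply IH F F' a c hcmem.1.le (hc.mono (Set.Icc_subset_Icc le_rfl hcmem.2.le)) _ hi1
        intro t ht
        refine hd t ⟨⟨ht.1.1, ht.1.2.trans hcmem.2⟩, ?_⟩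
        simp only [Finset.coe_insert, Set.mem_insert_iff]
        push_neg
        exact ⟨ne_of_lt ht.1.2, ht.2⟩
      have h2 : ∫ t in c..b, F' t = F b - F c := by
        apply IH F F' c b hcmem.2.le (hc.mono (Set.Icc_subset_Icc hcmem.1.le le_rfl)) _ hi2
        intro t ht
        refine hd t ⟨⟨hcmem.1.trans ht.1.1, ht.1.2⟩, ?_⟩
        simp only [Finset.coe_insert, Set.mem_insert_iff]
        push_neg
        exact ⟨ne_of_gt ht.1.1, ht.2⟩
      rw [← integral_add_adjacent_intervals hi1 hi2, h1, h2]
      ring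
    · apply IH F F' a b hab hc _ hi
      intro t ht
      refine hd t ⟨ht.1, ?_⟩
      simp only [Finset.coe_insert, Set.mem_insert_iff]
      push_neg
      refine ⟨fun h => hcmem (h ▸ ht.1), ht.2⟩

/-- If a nonneg continuous function on [a,b] has zero integral, it's zero on [a,b]. -/
lemma my_eq_zero_of_integral_zero {f : ℝ → ℝ} {a b : ℝ} (hab : a < b)
    (hfc : ContinuousOn f (Set.Icc a b)) (hle : ∀ x ∈ Set.Icc a b, 0 ≤ f x)
    (hz : ∫ x in a..b, f x = 0) : ∀ x ∈ Set.Icc a b, f x = 0 := by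
  intro x hx
  by_contra hne
  have hpos : 0 < ∫ x in a..b, f x :=
    integral_pos hab hfc (fun t ht => hle t (Set.Ioc_subset_Icc_self ht))
      ⟨x, hx, lt_of_le_of_ne (hle x hx) (Ne.symm hne)⟩
  linarith

lemma my_abs_le_one_add_sq (v : ℝ) : |v| ≤ 1 + v^2 := by
  nlinarith [sq_nonneg (|v| - 1), sq_abs v, abs_nonneg v]

lemma my_hd_sinh (c t : ℝ) : HasDerivAt (fun u => Real.sinh (c*u)) (c * Real.cosh (c*t)) t := by
  have hlin : HasDerivAt (fun u : ℝ => c*u) c t := by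
    simpa using (hasDerivAt_id t).const_mul c
  simpa [mul_comm, Function.comp_def] using (Real.hasDerivAt_sinh (c*t)).comp t hlin

lemma my_hd_cosh (c t : ℝ) : HasDerivAt (fun u => Real.cosh (c*u)) (c * Real.sinh (c*t)) t := by
  have hlin : HasDerivAt (fun u : ℝ => c*u) c t := by
    simpa using (hasDerivAt_id t).const_mul c
  simpa [mul_comm, Function.comp_def] using (Real.hasDerivAt_cosh (c*t)).comp t hlin

lemma my_hd_sinhT (c T t : ℝ) :
    HasDerivAt (fun u => Real.sinh (c*(T-u))) (-(c * Real.cosh (c*(T-t)))) t := by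
  have hlin : HasDerivAt (fun u : ℝ => c*(T-u)) (-c) t := by
    simpa using ((hasDerivAt_const t T).sub (hasDerivAt_id t)).const_mul c
  simpa [mul_comm, Function.comp_def] using (Real.hasDerivAt_sinh (c*(T-t))).comp t hlin

lemma my_hd_coshT (c T t : ℝ) :
    HasDerivAt (fun u => Real.cosh (c*(T-u))) (-(c * Real.sinh (c*(T-t)))) t := by
  have hlin : HasDerivAt (fun u : ℝ => c*(T-u)) (-c) t := by
    simpa using ((hasDerivAt_const t T).sub (hasDerivAt_id t)).const_mul c
  simpa [mul_comm, Function.comp_def] using (Real.hasDerivAt_cosh (c*(T-t))).comp t hlin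

set_option maxHeartbeats 1000000 in
theorem energy_lower_bound (ρ T x y : ℝ) (hρ : 0 < ρ) (hT : 0 < T)
    (δ δ' : ℝ → ℝ) (s : Finset ℝ)
    (hcont : ContinuousOn δ (Set.Icc 0 T))
    (hderiv : ∀ t ∈ Set.Icc (0 : ℝ) T \ (s : Set ℝ), HasDerivAt δ (δ' t) t)
    (hδ'cont : ContinuousOn δ' (Set.Icc 0 T \ (s : Set ℝ)))
    (hint : IntervalIntegrable (fun t => (δ' t) ^ 2) volume 0 T)
    (h0 : δ 0 = 0) (hTx : δ T = x) (hy : (∫ t in (0 : ℝ)..T, δ t) = y) :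
    ρ * (∫ t in (0 : ℝ)..T, (δ t) ^ 2) + (∫ t in (0 : ℝ)..T, (δ' t) ^ 2)
      ≥ Real.sqrt ρ * (x ^ 2 * (cosh (Real.sqrt ρ * T) / sinh (Real.sqrt ρ * T))
          + (x * tanh (Real.sqrt ρ * T / 2) - Real.sqrt ρ * y) ^ 2 /
            (Real.sqrt ρ * T - 2 * tanh (Real.sqrt ρ * T / 2)))
    ∧ (ρ * (∫ t in (0 : ℝ)..T, (δ t) ^ 2) + (∫ t in (0 : ℝ)..T, (δ' t) ^ 2)
        = Real.sqrt ρ * (x ^ 2 * (cosh (Real.sqrt ρ * T) / sinh (Real.sqrt ρ * T))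
          + (x * tanh (Real.sqrt ρ * T / 2) - Real.sqrt ρ * y) ^ 2 /
            (Real.sqrt ρ * T - 2 * tanh (Real.sqrt ρ * T / 2)))
      ↔ ∀ t ∈ Set.Icc (0 : ℝ) T,
          δ t = (x - (Real.sqrt ρ * y - x * tanh (Real.sqrt ρ * T / 2)) /
              (Real.sqrt ρ * T - 2 * tanh (Real.sqrt ρ * T / 2))) / sinh (Real.sqrt ρ * T)
              * sinh (Real.sqrt ρ * t)
            + (-((Real.sqrt ρ * y - x * tanh (Real.sqrt ρ * T / 2)) /
              (Real.sqrt ρ * T - 2 * tanh (Real.sqrt ρ * T / 2)))) / sinh (Real.sqrt ρ * T)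
              * sinh (Real.sqrt ρ * (T - t))
            + (Real.sqrt ρ * y - x * tanh (Real.sqrt ρ * T / 2)) /
              (Real.sqrt ρ * T - 2 * tanh (Real.sqrt ρ * T / 2))) := by
  have h0T : (0:ℝ) ≤ T := hT.le
  have huIcc : Set.uIcc (0:ℝ) T = Set.Icc 0 T := Set.uIcc_of_le h0T
  obtain ⟨a, hadef⟩ : ∃ v, Real.sqrt ρ = v := ⟨_, rfl⟩
  have ha : 0 < a := hadef ▸ Real.sqrt_pos.2 hρ
  have haa : a^2 = ρ := by rw [← hadef]; exact Real.sq_sqrt hρ.le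
  rw [hadef, ← haa]
  have hupos : 0 < a * T := mul_pos ha hT
  -- abbreviations
  obtain ⟨s2, hs2def⟩ : ∃ v, Real.sinh (a*T/2) = v := ⟨_, rfl⟩
  obtain ⟨c2, hc2def⟩ : ∃ v, Real.cosh (a*T/2) = v := ⟨_, rfl⟩
  obtain ⟨th, hthdef⟩ : ∃ v, Real.tanh (a*T/2) = v := ⟨_, rfl⟩
  obtain ⟨sh, hshdef⟩ : ∃ v, Real.sinh (a*T) = v := ⟨_, rfl⟩
  obtain ⟨ch, hchdef⟩ : ∃ v, Real.cosh (a*T) = v := ⟨_, rfl⟩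
  have hshpos : 0 < sh := hshdef ▸ Real.sinh_pos_iff.2 hupos
  have hcosh2pos : 0 < c2 := hc2def ▸ Real.cosh_pos _
  have hpyth : c2^2 - s2^2 = 1 := by
    rw [← hs2def, ← hc2def]; exact Real.cosh_sq_sub_sinh_sq _
  have hs2 : sh = 2 * s2 * c2 := by
    have h := Real.sinh_two_mul (a*T/2)
    rw [show 2*(a*T/2) = a*T by ring, hshdef, hs2def, hc2def] at h
    exact h
  have hc2 : ch = 2 * c2^2 - 1 := by
    have h := Real.cosh_two_mul (a*T/2)
    rw [show 2*(a*T/2) = a*T by ring, hchdef, hs2def, hc2def] at h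
    linarith only [h, hpyth]
  have hthc : th * c2 = s2 := by
    rw [← hthdef, ← hc2def, ← hs2def, Real.tanh_eq_sinh_div_cosh]
    field_simp
  have hkey : th * sh = ch - 1 := by
    have h1 : (th * sh) * c2 = (ch - 1) * c2 := by
      linear_combination sh*hthc + (s2 - th*c2)*hs2 + th*c2*hs2 - c2*hc2 - 2*c2*hpyth
    exact mul_right_cancel₀ hcosh2pos.ne' h1
  have hDpos0 : 0 < a*T - 2 * th := by
    have h := my_tanh_lt_self (by positivity : 0 < a*T/2)
    rw [hthdef] at h; linarith only [h]
  obtain ⟨D, hDu⟩ : ∃ v, v = a*T - 2*th := ⟨_, rfl⟩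
  have hDpos : 0 < D := hDu ▸ hDpos0
  have hDne : D ≠ 0 := ne_of_gt hDpos
  obtain ⟨C, hC⟩ : ∃ v, v = (a*y - x*th)/D := ⟨_, rfl⟩
  have hCD : C * D = a*y - x*th := by rw [hC]; field_simp
  obtain ⟨A, hA⟩ : ∃ v, v = (x - C)/sh := ⟨_, rfl⟩
  obtain ⟨B, hB⟩ : ∃ v, v = (-C)/sh := ⟨_, rfl⟩
  have hAsh : A * sh = x - C := by rw [hA]; field_simp
  have hBsh : B * sh = -C := by rw [hB]; field_simp
  have hinty : (A + B) * (ch - 1) / a + C * T = y := by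
    rw [div_add' _ _ _ ha.ne', div_eq_iff ha.ne']
    linear_combination (-(A+B)) * hkey + th * hAsh + th * hBsh + hCD + (-C) * hDu
  have hEG : x*(a*A*ch - a*B) + a^2*C*y = a*(x^2*(ch/sh) + (x*th - a*y)^2/D) := by
    have h1 : x*th - a*y = -(C*D) := by linear_combination hCD
    rw [h1]
    rw [show (-(C*D))^2/D = C^2*D by rw [div_eq_iff hDne]; ring]
    have e3 : x^2*(ch/sh)*sh = x^2*ch := by field_simp
    apply mul_right_cancel₀ hshpos.ne'
    linear_combination (x*a*ch)*hAsh - (x*a)*hBsh - a*e3 + (x*a*C)*hkey - (a*C*sh)*hCD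
  -- rewrite the goal in terms of the opaque constants
  rw [hthdef, hshdef, hchdef, ← hDu, ← hC, ← hA, ← hB]
  -- the candidate minimizer
  set g : ℝ → ℝ := fun t => A * Real.sinh (a*t) + B * Real.sinh (a*(T-t)) + C with hgdef
  set g' : ℝ → ℝ := fun t => a*A*Real.cosh (a*t) - a*B*Real.cosh (a*(T-t)) with hg'def
  have hgc : Continuous g := by
    rw [hgdef]; fun_prop
  have hg'c : Continuous g' := by
    rw [hg'def]; fun_prop
  have hgd : ∀ t, HasDerivAt g (g' t) t := by
    intro t
    have h := (((my_hd_sinh a t).const_mul A).add ((my_hd_sinhT a T t).const_mul B)).add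
      (hasDerivAt_const t C)
    refine h.congr_deriv ?_
    simp only [hg'def]; ring
  have hg'd : ∀ t, HasDerivAt g' (a^2 * (g t) - a^2*C) t := by
    intro t
    have h := (((my_hd_cosh a t).const_mul (a*A)).sub ((my_hd_coshT a T t).const_mul (a*B)))
    refine h.congr_deriv ?_
    simp only [hgdef]; ring
  have hg0 : g 0 = 0 := by
    simp only [hgdef, mul_zero, Real.sinh_zero, sub_zero, hshdef]
    linear_combination hBsh
  have hgT : g T = x := by
    simp only [hgdef, sub_self, mul_zero, Real.sinh_zero, hshdef]
    linear_combination hAsh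
  have hg'T : g' T = a*A*ch - a*B := by
    simp only [hg'def, sub_self, mul_zero, Real.cosh_zero, hchdef]
    ring
  -- integral of g is y
  have hgy : ∫ t in (0:ℝ)..T, g t = y := by
    have hGd : ∀ t, HasDerivAt (fun u => A/a*Real.cosh (a*u) - B/a*Real.cosh (a*(T-u)) + C*u)
        (g t) t := by
      intro t
      have h := (((my_hd_cosh a t).const_mul (A/a)).sub ((my_hd_coshT a T t).const_mul (B/a))).add
        ((hasDerivAt_id t).const_mul C)
      refine h.congr_deriv ?_
      simp only [hgdef]
      field_simp
      ring
    rw [integral_eq_sub_of_hasDerivAt (fun t _ => hGd t)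
      (hgc.intervalIntegrable 0 T)]
    simp only [mul_zero, sub_zero, sub_self, Real.cosh_zero, hchdef]
    linear_combination hinty
  -- integrability facts
  have igI : IntervalIntegrable g volume 0 T := hgc.intervalIntegrable 0 T
  have iδI : IntervalIntegrable δ volume 0 T :=
    ContinuousOn.intervalIntegrable (by rw [huIcc]; exact hcont)
  have iδ2 : IntervalIntegrable (fun t => (δ t)^2) volume 0 T :=
    ContinuousOn.intervalIntegrable (by rw [huIcc]; exact hcont.pow 2)
  have hsnull : volume ((s : Set ℝ)) = 0 := (s.finite_toSet).measure_zero _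
  have iδ' : IntervalIntegrable δ' volume 0 T := by
    rw [intervalIntegrable_iff_integrableOn_Ioc_of_le h0T]
    have hmeas : AEStronglyMeasurable δ' (volume.restrict (Set.Ioc 0 T)) := by
      have h1 : AEStronglyMeasurable δ' (volume.restrict (Set.Ioc 0 T \ (s : Set ℝ))) :=
        (hδ'cont.mono (Set.diff_subset_diff_left Set.Ioc_subset_Icc_self)).aestronglyMeasurable
          (measurableSet_Ioc.diff (s.finite_toSet).measurableSet)
      rwa [Measure.restrict_congr_set
        (diff_ae_eq_self.2 (measure_mono_null Set.inter_subset_right hsnull))] at h1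
    have hintIoc : IntegrableOn (fun t => 1 + (δ' t)^2) (Set.Ioc 0 T) volume := by
      apply Integrable.add
      · exact integrableOn_const measure_Ioc_lt_top.ne
      · exact (intervalIntegrable_iff_integrableOn_Ioc_of_le h0T).1 hint
    apply Integrable.mono' hintIoc hmeas
    refine ae_of_all _ fun t => ?_
    rw [Real.norm_eq_abs]
    exact my_abs_le_one_add_sq _
  have ig'2 : IntervalIntegrable (fun t => (g' t)^2) volume 0 T :=
    ((hg'c.pow 2).intervalIntegrable 0 T)
  have ig2 : IntervalIntegrable (fun t => (g t)^2) volume 0 T :=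
    ((hgc.pow 2).intervalIntegrable 0 T)
  have ig'δ' : IntervalIntegrable (fun t => g' t * δ' t) volume 0 T :=
    iδ'.continuousOn_mul hg'c.continuousOn
  have ih'2 : IntervalIntegrable (fun t => (δ' t - g' t)^2) volume 0 T := by
    have heq : (fun t => (δ' t - g' t)^2)
        = fun t => (δ' t)^2 - 2*(g' t * δ' t) + (g' t)^2 := by funext t; ring
    rw [heq]
    exact (hint.sub (ig'δ'.const_mul 2)).add ig'2
  have ih2 : IntervalIntegrable (fun t => (δ t - g t)^2) volume 0 T :=
    ContinuousOn.intervalIntegrable (by rw [huIcc]; exact (hcont.sub hgc.continuousOn).pow 2)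
  -- the cross term vanishes
  have hδg0 : ∫ t in (0:ℝ)..T, (δ t - g t) = 0 := by
    rw [integral_sub iδI igI, hy, hgy, sub_self]
  have iF' : IntervalIntegrable
      (fun t => (a^2*(g t) - a^2*C)*(δ t - g t) + (g' t * δ' t - g' t * g' t)) volume 0 T := by
    apply IntervalIntegrable.add
    · apply ContinuousOn.intervalIntegrable
      rw [huIcc]
      exact ((hgc.continuousOn.const_smul (a^2)).sub continuousOn_const).mul
        (hcont.sub hgc.continuousOn)
    · have hgg' : IntervalIntegrable (fun t => g' t * g' t) volume 0 T :=
        ((hg'c.mul hg'c).intervalIntegrable 0 T)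
      exact ig'δ'.sub hgg'
  have hcross : ∫ t in (0:ℝ)..T,
      ((a^2*(g t) - a^2*C)*(δ t - g t) + (g' t * δ' t - g' t * g' t)) = 0 := by
    have hFTC := my_ftc_finset s (fun t => g' t * (δ t - g t))
      (fun t => (a^2*(g t) - a^2*C)*(δ t - g t) + (g' t * δ' t - g' t * g' t)) 0 T h0T
      (hg'c.continuousOn.mul (hcont.sub hgc.continuousOn))
      (by
        intro t ht
        have hδd := hderiv t ⟨Set.Ioo_subset_Icc_self ht.1, ht.2⟩
        have h := (hg'd t).mul (hδd.sub (hgd t))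
        refine h.congr_deriv ?_
        simp only [Pi.sub_apply]; ring)
      iF'
    have hFTC' : ∫ t in (0:ℝ)..T,
        ((a^2*(g t) - a^2*C)*(δ t - g t) + (g' t * δ' t - g' t * g' t))
        = g' T * (δ T - g T) - g' 0 * (δ 0 - g 0) := hFTC
    rw [hFTC', hgT, hTx, hg0, h0, sub_self, sub_self, mul_zero, mul_zero, sub_self]
  have hcross2 : ∫ t in (0:ℝ)..T,
      ((a^2*(g t) - a^2*C)*(δ t - g t) + (g' t * δ' t - g' t * g' t)
        + (a^2*C)*(δ t - g t)) = 0 := by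
    rw [integral_add iF' ((iδI.sub igI).const_mul (a^2*C)), hcross,
      intervalIntegral.integral_const_mul, hδg0, mul_zero, add_zero]
  -- the energy of g
  have hP1 : ∫ t in (0:ℝ)..T, (a^2*(g t)^2 + (g' t)^2) = a*(x^2*(ch/sh) + (x*th - a*y)^2/D) := by
    have hF2d : ∀ t, HasDerivAt (fun u => g u * g' u)
        ((g' t)*(g' t) + (g t)*(a^2*(g t) - a^2*C)) t := by
      intro t
      exact (hgd t).mul (hg'd t)
    have hF2int : IntervalIntegrable (fun t => (g' t)*(g' t) + (g t)*(a^2*(g t) - a^2*C))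
        volume 0 T := by
      apply Continuous.intervalIntegrable
      exact (hg'c.mul hg'c).add (hgc.mul ((hgc.const_smul (a^2)).sub continuous_const))
    have hFTC2 : ∫ t in (0:ℝ)..T, ((g' t)*(g' t) + (g t)*(a^2*(g t) - a^2*C))
        = g T * g' T - g 0 * g' 0 :=
      integral_eq_sub_of_hasDerivAt (f := fun u => g u * g' u) (fun t _ => hF2d t) hF2int
    have heq : (fun t => a^2*(g t)^2 + (g' t)^2)
        = fun t => ((g' t)*(g' t) + (g t)*(a^2*(g t) - a^2*C)) + (a^2*C)*(g t) := by
      funext t; ring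
    rw [heq, integral_add hF2int (igI.const_mul (a^2*C)), hFTC2, intervalIntegral.integral_const_mul, hgy,
      hgT, hg0, hg'T]
    rw [← hEG]
    ring
  -- master decomposition
  have iP1 : IntervalIntegrable (fun t => a^2*(g t)^2 + (g' t)^2) volume 0 T :=
    (ig2.const_mul (a^2)).add ig'2
  have iP2 : IntervalIntegrable (fun t => a^2*(δ t - g t)^2 + (δ' t - g' t)^2) volume 0 T :=
    (ih2.const_mul (a^2)).add ih'2
  have iP3 : IntervalIntegrable
      (fun t => (a^2*(g t) - a^2*C)*(δ t - g t) + (g' t * δ' t - g' t * g' t)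
        + (a^2*C)*(δ t - g t)) volume 0 T :=
    iF'.add ((iδI.sub igI).const_mul (a^2*C))
  have hmaster : a^2 * (∫ t in (0:ℝ)..T, (δ t)^2) + (∫ t in (0:ℝ)..T, (δ' t)^2)
      = a*(x^2*(ch/sh) + (x*th - a*y)^2/D)
        + ∫ t in (0:ℝ)..T, (a^2*(δ t - g t)^2 + (δ' t - g' t)^2) := by
    have hLHS : a^2 * (∫ t in (0:ℝ)..T, (δ t)^2) + (∫ t in (0:ℝ)..T, (δ' t)^2)
        = ∫ t in (0:ℝ)..T, (a^2*(δ t)^2 + (δ' t)^2) := by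
      rw [integral_add (iδ2.const_mul (a^2)) hint, intervalIntegral.integral_const_mul]
    have hsplit : (fun t => a^2*(δ t)^2 + (δ' t)^2)
        = fun t => (a^2*(g t)^2 + (g' t)^2) + (a^2*(δ t - g t)^2 + (δ' t - g' t)^2)
          + 2*((a^2*(g t) - a^2*C)*(δ t - g t) + (g' t * δ' t - g' t * g' t)
            + (a^2*C)*(δ t - g t)) := by
      funext t; ring
    rw [hLHS, hsplit, integral_add (iP1.add iP2) (iP3.const_mul 2),
      integral_add iP1 iP2, intervalIntegral.integral_const_mul, hcross2, mul_zero, add_zero, hP1]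
  set Q := ∫ t in (0:ℝ)..T, (a^2*(δ t - g t)^2 + (δ' t - g' t)^2) with hQdef
  have hQnonneg : 0 ≤ Q := by
    apply integral_nonneg h0T
    intro u _
    positivity
  constructor
  · rw [ge_iff_le, hmaster]
    linarith only [hQnonneg]
  · rw [hmaster]
    constructor
    · -- equality implies δ = g on [0,T]
      intro hEq
      have hQ0 : Q = 0 := by linarith only [hEq]
      have hsplitQ : Q = (∫ t in (0:ℝ)..T, a^2*(δ t - g t)^2)
          + ∫ t in (0:ℝ)..T, (δ' t - g' t)^2 := by
        rw [hQdef, integral_add (ih2.const_mul (a^2)) ih'2]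
      have h1 : 0 ≤ ∫ t in (0:ℝ)..T, a^2*(δ t - g t)^2 :=
        integral_nonneg h0T (fun u _ => by positivity)
      have h2 : 0 ≤ ∫ t in (0:ℝ)..T, (δ' t - g' t)^2 :=
        integral_nonneg h0T (fun u _ => by positivity)
      have h3 : ∫ t in (0:ℝ)..T, a^2*(δ t - g t)^2 = 0 := by
        linarith only [hQ0, h1, h2, hsplitQ]
      have h4 := my_eq_zero_of_integral_zero (f := fun t => a^2*(δ t - g t)^2) hT
        (((hcont.sub hgc.continuousOn).pow 2).const_smul (a^2))
        (fun u _ => by positivity) h3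
      intro t ht
      have h5 := h4 t ht
      have h6 : (δ t - g t)^2 = 0 :=
        (mul_eq_zero.1 h5).resolve_left (pow_ne_zero 2 ha.ne')
      have h7 : δ t = g t :=
        sub_eq_zero.1 (pow_eq_zero_iff (n := 2) (by norm_num) |>.1 h6)
      rw [h7]
    · -- δ = g on [0,T] implies equality
      intro hEq
      have hQ0 : Q = 0 := by
        have hnull : volume ((s : Set ℝ) ∪ {T}) = 0 :=
          measure_union_null hsnull ((Set.finite_singleton T).measure_zero _)
        have hae : ∀ᵐ t : ℝ, t ∉ ((s : Set ℝ) ∪ {T}) :=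
          measure_eq_zero_iff_ae_notMem.mp hnull
        have hae2 : ∀ᵐ t : ℝ, t ∈ Set.uIoc (0:ℝ) T →
            (a^2*(δ t - g t)^2 + (δ' t - g' t)^2) = 0 := by
          filter_upwards [hae] with t htn htm
          rw [Set.uIoc_of_le h0T] at htm
          have htT : t ≠ T := fun h => htn (Or.inr (by simp [h]))
          have hts : t ∉ (s : Set ℝ) := fun h => htn (Or.inl h)
          have htIoo : t ∈ Set.Ioo 0 T := ⟨htm.1, lt_of_le_of_ne htm.2 htT⟩
          have hδg : δ t = g t := hEq t (Set.Ioo_subset_Icc_self htIoo)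
          have hδ'g' : δ' t = g' t := by
            have hδd := hderiv t ⟨Set.Ioo_subset_Icc_self htIoo, hts⟩
            have hev : g =ᶠ[nhds t] δ := by
              filter_upwards [Ioo_mem_nhds htIoo.1 htIoo.2] with u hu
              exact (hEq u (Set.Ioo_subset_Icc_self hu)).symm
            have : HasDerivAt g (δ' t) t := hδd.congr_of_eventuallyEq hev
            exact ((hgd t).unique this).symm
          rw [hδg, hδ'g']
          ring
        rw [hQdef, intervalIntegral.integral_congr_ae hae2, intervalIntegral.integral_zero]
      rw [hQ0, add_zero]
end

section
/- Let ρ, T, Λ > 0 and κ ∈ (0, 1/(2ρΛT)). With A, B, C as in the previous statement, B < 0 and AB − C² > 0; consequently for any η, θ ∈ ℝ the quadratic form (x,y) ↦ Ax² + By² + 2Cxy + ηx + θy has a unique maximizer given by (x̄, ȳ) = (1/(2(AB − C²)))·(Cθ − Bη, Cη − Aθ). -/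
open Real

private lemma tanh_lt_self' {x : ℝ} (hx : 0 < x) : Real.tanh x < x := by
  have key : ∀ y : ℝ, HasDerivAt (fun y : ℝ => y * Real.cosh y - Real.sinh y)
      (y * Real.sinh y) y := by
    intro y
    have h1 : HasDerivAt (fun y : ℝ => y * Real.cosh y - Real.sinh y)
        (1 * Real.cosh y + y * Real.sinh y - Real.cosh y) y :=
      ((hasDerivAt_id y).mul (Real.hasDerivAt_cosh y)).sub (Real.hasDerivAt_sinh y)
    convert h1 using 1; ring
  have hmono : StrictMonoOn (fun y : ℝ => y * Real.cosh y - Real.sinh y) (Set.Ici 0) := by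
    apply strictMonoOn_of_deriv_pos (convex_Ici 0)
    · exact ((continuous_id.mul Real.continuous_cosh).sub Real.continuous_sinh).continuousOn
    · intro y hy
      rw [interior_Ici, Set.mem_Ioi] at hy
      rw [(key y).deriv]
      exact mul_pos hy (Real.sinh_pos_iff.2 hy)
  have h0 : (0 : ℝ) * Real.cosh 0 - Real.sinh 0 < x * Real.cosh x - Real.sinh x :=
    hmono (Set.mem_Ici.2 le_rfl) (Set.mem_Ici.2 hx.le) hx
  simp only [Real.cosh_zero, Real.sinh_zero, zero_mul, sub_zero] at h0
  have hsinh : Real.sinh x < x * Real.cosh x := by linarith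
  rw [Real.tanh_eq_sinh_div_cosh, div_lt_iff₀ (Real.cosh_pos x)]
  linarith [hsinh]

private lemma quad_max_aux (A B C : ℝ) (hBneg : B < 0) (hD : 0 < A * B - C ^ 2) (η θ : ℝ) :
    ∃! p : ℝ × ℝ,
      (∀ q : ℝ × ℝ, A * q.1 ^ 2 + B * q.2 ^ 2 + 2 * C * q.1 * q.2 + η * q.1 + θ * q.2
          ≤ A * p.1 ^ 2 + B * p.2 ^ 2 + 2 * C * p.1 * p.2 + η * p.1 + θ * p.2) ∧
      p = (1 / (2 * (A * B - C ^ 2)) * (C * θ - B * η),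
           1 / (2 * (A * B - C ^ 2)) * (C * η - A * θ)) := by
  have hAneg : A < 0 := by nlinarith [sq_nonneg C]
  have hDne : A * B - C ^ 2 ≠ 0 := ne_of_gt hD
  have key : ∀ u v : ℝ, A * u ^ 2 + B * v ^ 2 + 2 * C * u * v ≤ 0 := by
    intro u v
    nlinarith [sq_nonneg (A * u + C * v), mul_nonneg hD.le (sq_nonneg v), hAneg]
  refine ⟨(1 / (2 * (A * B - C ^ 2)) * (C * θ - B * η),
           1 / (2 * (A * B - C ^ 2)) * (C * η - A * θ)), ⟨?_, rfl⟩, fun y hy => hy.2⟩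
  intro q
  set x : ℝ := 1 / (2 * (A * B - C ^ 2)) * (C * θ - B * η) with hx
  set y : ℝ := 1 / (2 * (A * B - C ^ 2)) * (C * η - A * θ) with hy
  have hid : (A * q.1 ^ 2 + B * q.2 ^ 2 + 2 * C * q.1 * q.2 + η * q.1 + θ * q.2)
      - (A * x ^ 2 + B * y ^ 2 + 2 * C * x * y + η * x + θ * y)
      = A * (q.1 - x) ^ 2 + B * (q.2 - y) ^ 2 + 2 * C * (q.1 - x) * (q.2 - y) := by
    rw [hx, hy]
    field_simp
    ring
  linarith [key (q.1 - x) (q.2 - y), hid]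

theorem quadratic_form_maximizer (ρ T Λ κ : ℝ) (hρ : 0 < ρ) (hT : 0 < T) (hΛ : 0 < Λ)
    (hκ : κ ∈ Set.Ioo 0 (1 / (2 * ρ * Λ * T)))
    (A B C : ℝ)
    (hA : A = κ - 1 / (2 * Λ * Real.sqrt ρ) *
      (cosh (Real.sqrt ρ * T) / sinh (Real.sqrt ρ * T)
        + tanh (Real.sqrt ρ * T / 2) ^ 2 /
          (Real.sqrt ρ * T - 2 * tanh (Real.sqrt ρ * T / 2))))
    (hB : B = 1 / (2 * Λ * T) - Real.sqrt ρ /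
      (2 * Λ * (Real.sqrt ρ * T - 2 * tanh (Real.sqrt ρ * T / 2))))
    (hC : C = tanh (Real.sqrt ρ * T / 2) /
      (2 * Λ * (Real.sqrt ρ * T - 2 * tanh (Real.sqrt ρ * T / 2)))) :
    B < 0 ∧ A * B - C ^ 2 > 0 ∧
    ∀ η θ : ℝ, ∃! p : ℝ × ℝ,
      (∀ q : ℝ × ℝ, A * q.1 ^ 2 + B * q.2 ^ 2 + 2 * C * q.1 * q.2 + η * q.1 + θ * q.2
          ≤ A * p.1 ^ 2 + B * p.2 ^ 2 + 2 * C * p.1 * p.2 + η * p.1 + θ * p.2) ∧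
      p = (1 / (2 * (A * B - C ^ 2)) * (C * θ - B * η),
           1 / (2 * (A * B - C ^ 2)) * (C * η - A * θ)) := by
  set s : ℝ := Real.sqrt ρ with hsdef
  have hs : 0 < s := Real.sqrt_pos.2 hρ
  have hρs : s ^ 2 = ρ := Real.sq_sqrt hρ.le
  set t : ℝ := Real.tanh (s * T / 2) with htdef
  have hzpos : 0 < s * T := mul_pos hs hT
  have ht0 : 0 < t := by
    rw [htdef, Real.tanh_eq_sinh_div_cosh]
    exact div_pos (Real.sinh_pos_iff.2 (by positivity)) (Real.cosh_pos _)
  have htlt : t < s * T / 2 := tanh_lt_self' (by positivity)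
  have hd : 0 < s * T - 2 * t := by linarith
  have hdne : s * T - 2 * t ≠ 0 := ne_of_gt hd
  have hshpos : 0 < Real.sinh (s * T) := Real.sinh_pos_iff.2 hzpos
  -- double angle identity : cosh z = (t^2+1)/(2t) * sinh z
  have hch : Real.cosh (s * T) = (t ^ 2 + 1) / (2 * t) * Real.sinh (s * T) := by
    have ha : 0 < Real.sinh (s * T / 2) := Real.sinh_pos_iff.2 (by positivity)
    have hc : 0 < Real.cosh (s * T / 2) := Real.cosh_pos _
    have h1 : Real.sinh (s * T) = 2 * Real.sinh (s * T / 2) * Real.cosh (s * T / 2) := by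
      conv_lhs => rw [show s * T = 2 * (s * T / 2) by ring, Real.sinh_two_mul]
    have h2 : Real.cosh (s * T) = Real.cosh (s * T / 2) ^ 2 + Real.sinh (s * T / 2) ^ 2 := by
      conv_lhs => rw [show s * T = 2 * (s * T / 2) by ring, Real.cosh_two_mul]
    rw [h1, h2, htdef, Real.tanh_eq_sinh_div_cosh]
    field_simp
    ring
  -- closed form for B
  have hBv : B = -(s * t) / (Λ * (s * T) * (s * T - 2 * t)) := by
    rw [hB]
    have hd' : T * s - t * 2 ≠ 0 := by intro h; apply hdne; linarith
    field_simp
    linear_combination (-1 : ℝ) * mul_inv_cancel₀ hd'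
  have hBneg : B < 0 := by
    rw [hBv]
    apply div_neg_of_neg_of_pos
    · nlinarith
    · positivity
  -- closed form for the determinant
  have hDv : A * B - C ^ 2
      = (1 - 4 * κ * Λ * s * t) / (4 * Λ ^ 2 * (s * T) * (s * T - 2 * t)) := by
    rw [hA, hB, hC, hch]
    field_simp
    ring
  have hnum : 0 < 1 - 4 * κ * Λ * s * t := by
    have hκ0 : 0 < κ := hκ.1
    have h2 := hκ.2
    rw [lt_div_iff₀ (by positivity)] at h2
    have h3 : κ * (2 * ρ * Λ * T) = 2 * κ * Λ * s * (s * T) := by rw [← hρs]; ring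
    have h4 : 0 < κ * Λ * s := by positivity
    nlinarith [mul_pos h4 hd]
  have hD : A * B - C ^ 2 > 0 := by
    rw [hDv]
    exact div_pos hnum (by positivity)
  exact ⟨hBneg, hD, fun η θ => quad_max_aux A B C hBneg hD η θ⟩
end
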